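/- Let G be a finite nonabelian group admitting an abelian partition, with minimal abelian partition size m = ϑ_a(G) ≥ 3. Then there exists a minimal abelian partition A_1 ⊎ ... ⊎ A_m of G such that Z(G) is a proper subset of A_1. -/
import Mathlib


/-- An abelian partition of a group `G`: a family of `n` pairwise disjoint sets covering `G`,
each of size at least 2 and consisting of pairwise commuting elements. -/
def IsAbelianPartition {G : Type*} [Group G] {n : ℕ} (A : Fin n → Set G) : Prop :=
  (∀ i, 2 ≤ (A i).ncard) ∧ (⋃ i, A i) = Set.univ ∧
    Pairwise (Function.onFun Disjoint A) ∧
    ∀ i, ∀ x ∈ A i, ∀ y ∈ A i, x * y = y * x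

/-- The minimal number of parts in an abelian partition of `G` (0 if none exists). -/
noncomputable def apDegree (G : Type*) [Group G] : ℕ :=
  sInf {n | ∃ A : Fin n → Set G, IsAbelianPartition A}

/-- The maximal size of a noncommuting subset of `G`. -/
noncomputable def maxNoncommuting (G : Type*) [Group G] : ℕ :=
  sSup {k | ∃ S : Set G, S.ncard = k ∧ ∀ x ∈ S, ∀ y ∈ S, x ≠ y → x * y ≠ y * x}

private lemma isAbelianPartition_comp_equiv {G : Type*} [Group G] {n : ℕ} {A : Fin n → Set G}
    (h : IsAbelianPartition A) (e : Fin n ≃ Fin n) : IsAbelianPartition (A ∘ e) := by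
  obtain ⟨h1, h2, h3, h4⟩ := h
  refine ⟨fun i => h1 (e i), ?_, ?_, fun i => h4 (e i)⟩
  · rw [← h2]
    exact e.surjective.iUnion_comp A
  · intro i j hij
    exact h3 (fun hc => hij (e.injective hc))

/-- If we have a "weak abelian partition" (parts may be empty, nonempty parts have size ≥ 2),
then the abelian partition degree is at most the number of parts. -/
private lemma apDegree_le_of_weak {G : Type*} [Group G] :
    ∀ n : ℕ, ∀ A : Fin n → Set G, (⋃ i, A i) = Set.univ →
      Pairwise (Function.onFun Disjoint A) →
      (∀ i, ∀ x ∈ A i, ∀ y ∈ A i, x * y = y * x) →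
      (∀ i, A i = ∅ ∨ 2 ≤ (A i).ncard) → apDegree G ≤ n := by
  intro n
  induction n using Nat.strong_induction_on with
  | _ n ih =>
    intro A hcov hdisj hcomm hsz
    by_cases hne : ∀ i, (A i).Nonempty
    · refine Nat.sInf_le ⟨A, ?_, hcov, hdisj, hcomm⟩
      intro i
      refine (hsz i).resolve_left ?_
      intro h
      exact (hne i).ne_empty h
    · push_neg at hne
      obtain ⟨i, hi⟩ := hne
      obtain ⟨k, rfl⟩ : ∃ k, n = k + 1 := ⟨n - 1, by have := i.is_lt; omega⟩
      have hcov' : (⋃ j, A (i.succAbove j)) = Set.univ := by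
        rw [← hcov]
        apply subset_antisymm
        · exact Set.iUnion_subset fun j => Set.subset_iUnion A (i.succAbove j)
        · intro g hg
          rw [Set.mem_iUnion] at hg ⊢
          obtain ⟨l, hl⟩ := hg
          have hli : l ≠ i := by rintro rfl; rw [hi] at hl; exact hl
          obtain ⟨j, hj⟩ := Fin.exists_succAbove_eq hli
          exact ⟨j, by rw [hj]; exact hl⟩
      have hd' : Pairwise (Function.onFun Disjoint (fun j => A (i.succAbove j))) := by
        intro j j' hjj
        exact hdisj (fun hc => hjj (Fin.succAbove_right_injective hc))
      have := ih k (by omega) (fun j => A (i.succAbove j)) hcov' hd'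
        (fun j => hcomm _) (fun j => hsz _)
      omega

theorem exists_minimal_partition_with_center_in_first_part
    {G : Type*} [Group G] [Finite G]
    (hna : ∃ x y : G, x * y ≠ y * x)
    {m : ℕ} (hm : 3 ≤ m) (hdeg : apDegree G = m) :
    ∃ A : Fin m → Set G, IsAbelianPartition A ∧
      (Subgroup.center G : Set G) ⊂ A ⟨0, by omega⟩ := by
  classical
  -- obtain a minimal abelian partition B
  have hSne : {n | ∃ A : Fin n → Set G, IsAbelianPartition A}.Nonempty := by
    by_contra h
    rw [Set.not_nonempty_iff_eq_empty] at h
    rw [apDegree, h, Nat.sInf_empty] at hdeg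
    omega
  have hmem : m ∈ {n | ∃ A : Fin n → Set G, IsAbelianPartition A} := by
    rw [← hdeg]; exact Nat.sInf_mem hSne
  obtain ⟨B, hB⟩ := hmem
  obtain ⟨hB1, hB2, hB3, hB4⟩ := hB
  -- a noncentral element
  obtain ⟨gs, ys, hgys⟩ := hna
  have hgs : gs ∉ Subgroup.center G := by
    intro h
    exact hgys ((Subgroup.mem_center_iff.mp h ys).symm)
  -- convenient: central elements commute with everything
  have hzc : ∀ a : G, a ∈ Subgroup.center G → ∀ w : G, Commute a w :=
    fun a ha w => (Subgroup.mem_center_iff.mp ha w).symm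
  by_cases htriv : ∀ z : G, z ∈ Subgroup.center G → z = 1
  · -- trivial center: use B itself, with the part containing 1 moved to index 0
    have h1 : (1 : G) ∈ ⋃ i, B i := by rw [hB2]; trivial
    rw [Set.mem_iUnion] at h1
    obtain ⟨ie, hie⟩ := h1
    refine ⟨B ∘ Equiv.swap ⟨0, by omega⟩ ie,
      isAbelianPartition_comp_equiv ⟨hB1, hB2, hB3, hB4⟩ _, ?_⟩
    have hA0 : (B ∘ Equiv.swap ⟨0, by omega⟩ ie) ⟨0, by omega⟩ = B ie := by
      simp [Equiv.swap_apply_left]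
    rw [hA0, Set.ssubset_def]
    constructor
    · intro z hz
      have : z = 1 := htriv z hz
      rw [this]; exact hie
    · intro hsub
      -- B ie has two elements, one of them is not 1, hence not central
      have h2 : 1 < (B ie).ncard := hB1 ie
      rw [Set.one_lt_ncard_iff (Set.toFinite _)] at h2
      obtain ⟨a, b, ha, hb, hab⟩ := h2
      by_cases ha1 : a = 1
      · have hb1 : b ≠ 1 := by rw [ha1] at hab; exact fun h => hab h.symm
        have := hsub hb
        exact hb1 (htriv b this)
      · have := hsub ha
        exact ha1 (htriv a this)
  · -- nontrivial center
    push_neg at htriv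
    obtain ⟨z0, hz0c, hz0⟩ := htriv
    -- the predicate: part i meets the coset g·Z
    set P : G → Fin m → Prop := fun g i => ∃ b ∈ B i, b⁻¹ * g ∈ Subgroup.center G with hP
    have hPex : ∀ g : G, ((Finset.univ.filter (fun i => P g i))).Nonempty := by
      intro g
      have hg : g ∈ ⋃ i, B i := by rw [hB2]; trivial
      rw [Set.mem_iUnion] at hg
      obtain ⟨i, hi⟩ := hg
      exact ⟨i, Finset.mem_filter.mpr ⟨Finset.mem_univ _, ⟨g, hi, by simpa using one_mem _⟩⟩⟩
    set idx : G → Fin m := fun g => (Finset.univ.filter (fun i => P g i)).min' (hPex g)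
      with hidx
    have hPidx : ∀ g : G, P g (idx g) := by
      intro g
      have := Finset.min'_mem (Finset.univ.filter (fun i => P g i)) (hPex g)
      exact (Finset.mem_filter.mp this).2
    have hle : ∀ (g : G) (i : Fin m), P g i → idx g ≤ i := by
      intro g i hi
      exact Finset.min'_le _ _ (Finset.mem_filter.mpr ⟨Finset.mem_univ _, hi⟩)
    have hPz : ∀ (g z : G), z ∈ Subgroup.center G → ∀ i, P g i → P (g * z) i := by
      rintro g z hz i ⟨b, hb, hbg⟩
      refine ⟨b, hb, ?_⟩
      rw [← mul_assoc]
      exact mul_mem hbg hz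
    have hidxz : ∀ (g z : G), z ∈ Subgroup.center G → idx (g * z) = idx g := by
      intro g z hz
      refine le_antisymm (hle _ _ (hPz g z hz _ (hPidx g))) ?_
      have h2 : idx (g * z * z⁻¹) ≤ idx (g * z) :=
        hle _ _ (hPz (g * z) z⁻¹ (inv_mem hz) _ (hPidx (g * z)))
      rwa [mul_inv_cancel_right] at h2
    set i0 : Fin m := idx gs with hi0
    -- the new partition
    set A : Fin m → Set G := fun i =>
      {g | g ∉ Subgroup.center G ∧ idx g = i} ∪
        (if i = i0 then (Subgroup.center G : Set G) else ∅) with hA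
    have hAcent : ∀ (i : Fin m) (w : G),
        w ∈ (if i = i0 then (Subgroup.center G : Set G) else ∅) → w ∈ Subgroup.center G := by
      intro i w hw
      split at hw
      · exact hw
      · exact absurd hw (Set.notMem_empty w)
    -- commuting
    have hcomm : ∀ i, ∀ x ∈ A i, ∀ y ∈ A i, x * y = y * x := by
      intro i x hx y hy
      rcases hy with hy | hy
      swap
      · exact (hzc y (hAcent i y hy) x).symm.eq
      rcases hx with hx | hx
      swap
      · exact (hzc x (hAcent i x hx) y).eq
      obtain ⟨hxnc, hxi⟩ := hx
      obtain ⟨hync, hyi⟩ := hy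
      obtain ⟨bx, hbx, hbxz⟩ := hPidx x
      obtain ⟨by', hby, hbyz⟩ := hPidx y
      rw [hxi] at hbx
      rw [hyi] at hby
      have hcb : Commute bx by' := hB4 i bx hbx by' hby
      have hx' : x = bx * (bx⁻¹ * x) := by group
      have hy' : y = by' * (by'⁻¹ * y) := by group
      have : Commute x y := by
        rw [hx', hy']
        exact Commute.mul_left
          (Commute.mul_right hcb (hzc _ hbyz bx).symm)
          (Commute.mul_right (hzc _ hbxz by') (hzc _ hbxz _))
      exact this.eq
    -- coverage
    have hcov : (⋃ i, A i) = Set.univ := by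
      apply Set.eq_univ_of_forall
      intro g
      rw [Set.mem_iUnion]
      by_cases hg : g ∈ Subgroup.center G
      · exact ⟨i0, Or.inr (by rw [if_pos rfl]; exact hg)⟩
      · exact ⟨idx g, Or.inl ⟨hg, rfl⟩⟩
    -- disjointness
    have hdisj : Pairwise (Function.onFun Disjoint A) := by
      intro i j hij
      rw [Function.onFun, Set.disjoint_left]
      intro g hgi hgj
      by_cases hg : g ∈ Subgroup.center G
      · rcases hgi with hgi | hgi
        · exact hgi.1 hg
        · rcases hgj with hgj | hgj
          · exact hgj.1 hg
          · have h1 : i = i0 := by by_contra h; rw [if_neg h] at hgi; exact hgi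
            have h2 : j = i0 := by by_contra h; rw [if_neg h] at hgj; exact hgj
            exact hij (h1.trans h2.symm)
      · have h1 : idx g = i := by
          rcases hgi with hgi | hgi
          · exact hgi.2
          · exact absurd (hAcent i g hgi) hg
        have h2 : idx g = j := by
          rcases hgj with hgj | hgj
          · exact hgj.2
          · exact absurd (hAcent j g hgj) hg
        exact hij (h1 ▸ h2)
    -- sizes of nonempty parts
    have hsz : ∀ i, A i = ∅ ∨ 2 ≤ (A i).ncard := by
      intro i
      by_cases hie : A i = ∅
      · exact Or.inl hie
      right
      rw [show (2 : ℕ) ≤ (A i).ncard ↔ 1 < (A i).ncard from Iff.rfl,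
        Set.one_lt_ncard_iff (Set.toFinite _)]
      by_cases hii : i = i0
      · subst hii
        refine ⟨1, gs, Or.inr (by rw [if_pos rfl]; exact one_mem _), Or.inl ⟨hgs, rfl⟩, ?_⟩
        intro h
        exact hgs (h ▸ one_mem _)
      · obtain ⟨g, hg⟩ := Set.nonempty_iff_ne_empty.mpr hie
        rcases hg with hg | hg
        swap
        · rw [if_neg hii] at hg; exact absurd hg (Set.notMem_empty g)
        obtain ⟨hgnc, hgi⟩ := hg
        refine ⟨g, g * z0, Or.inl ⟨hgnc, hgi⟩, Or.inl ⟨?_, by rw [hidxz g z0 hz0c, hgi]⟩, ?_⟩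
        · intro h
          have : g * z0 * z0⁻¹ ∈ Subgroup.center G := mul_mem h (inv_mem hz0c)
          rw [mul_inv_cancel_right] at this
          exact hgnc this
        · intro h
          apply hz0
          have := mul_left_cancel (a := g) (b := (1 : G)) (c := z0) (by rw [mul_one]; exact h)
          exact this.symm
    -- every part must be nonempty, else we contradict minimality
    have hne : ∀ i, (A i).Nonempty := by
      intro i
      rw [Set.nonempty_iff_ne_empty]
      intro hie
      have hlt := apDegree_le_of_weak m A hcov hdisj hcomm hsz
      -- drop the empty part to get a strictly smaller weak partition
      obtain ⟨k, rfl⟩ : ∃ k, m = k + 1 := ⟨m - 1, by omega⟩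
      have hcov' : (⋃ j, A (i.succAbove j)) = Set.univ := by
        rw [← hcov]
        apply subset_antisymm
        · exact Set.iUnion_subset fun j => Set.subset_iUnion A (i.succAbove j)
        · intro g hg
          rw [Set.mem_iUnion] at hg ⊢
          obtain ⟨l, hl⟩ := hg
          have hli : l ≠ i := by rintro rfl; rw [hie] at hl; exact hl
          obtain ⟨j, hj⟩ := Fin.exists_succAbove_eq hli
          exact ⟨j, by rw [hj]; exact hl⟩
      have hd' : Pairwise (Function.onFun Disjoint (fun j => A (i.succAbove j))) := by
        intro j j' hjj
        exact hdisj (fun hc => hjj (Fin.succAbove_right_injective hc))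
      have := apDegree_le_of_weak k (fun j => A (i.succAbove j)) hcov' hd'
        (fun j => hcomm _) (fun j => hsz _)
      omega
    have hpart : IsAbelianPartition A :=
      ⟨fun i => (hsz i).resolve_left (hne i).ne_empty, hcov, hdisj, hcomm⟩
    refine ⟨A ∘ Equiv.swap ⟨0, by omega⟩ i0,
      isAbelianPartition_comp_equiv hpart _, ?_⟩
    have hA0 : (A ∘ Equiv.swap ⟨0, by omega⟩ i0) ⟨0, by omega⟩ = A i0 := by
      simp [Equiv.swap_apply_left]
    rw [hA0, Set.ssubset_def]
    constructor
    · intro z hz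
      exact Or.inr (by rw [if_pos rfl]; exact hz)
    · intro hsub
      have hgsmem : gs ∈ A i0 := Or.inl ⟨hgs, rfl⟩
      exact hgs (hsub hgsmem)
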